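/- Let A be an invertible n×n real matrix with |det A| > 0, such that each column of A has Euclidean norm at most C. Then the operator norm of A⁻¹ satisfies ‖A⁻¹‖ ≤ n · C^(n-1) / |det A|. -/

import Mathlib

open Finset Matrix

/-- Hadamard's inequality: `|det M|` is at most the product of the Euclidean norms of the
columns of `M`. -/
lemma hadamard_cols (N : ℕ) (M : Matrix (Fin N) (Fin N) ℝ) :
    |M.det| ≤ ∏ j, Real.sqrt (∑ i, (M i j) ^ 2) := by
  classical
  have hcard : Module.finrank ℝ (EuclideanSpace ℝ (Fin N)) = Fintype.card (Fin N) := by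
    simp [finrank_euclideanSpace]
  set f : Fin N → EuclideanSpace ℝ (Fin N) :=
    fun j => (WithLp.equiv 2 _).symm (fun i => M i j) with hf
  have hnorm : ∀ j, ‖f j‖ = Real.sqrt (∑ i, (M i j) ^ 2) := by
    intro j
    rw [EuclideanSpace.norm_eq]
    congr 1
    refine Finset.sum_congr rfl fun i _ => ?_
    simp [f, Real.norm_eq_abs, sq_abs]
  set b := EuclideanSpace.basisFun (Fin N) ℝ with hb
  haveI iwf : WellFoundedLT (Fin N) := inferInstance
  set g : OrthonormalBasis (Fin N) ℝ (EuclideanSpace ℝ (Fin N)) :=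
    @InnerProductSpace.gramSchmidtOrthonormalBasis ℝ _ _ _ _ (Fin N) _ _ iwf _ _ hcard f with hg
  have h1 : b.toBasis.det f = M.det := by
    rw [Module.Basis.det_apply]
    congr 1
  have h2 : b.toBasis.toMatrix f = b.toBasis.toMatrix g.toBasis * g.toBasis.toMatrix f :=
    (Module.Basis.toMatrix_mul_toMatrix _ _ _).symm
  have h3 : M.det = b.toBasis.det g.toBasis * g.toBasis.det f := by
    rw [← h1, Module.Basis.det_apply, Module.Basis.det_apply, Module.Basis.det_apply, h2, Matrix.det_mul]
  have habs1 : |b.toBasis.det g.toBasis| = 1 := by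
    have := OrthonormalBasis.det_to_matrix_orthonormalBasis b g
    rw [Real.norm_eq_abs] at this
    convert this using 3
    exact g.coe_toBasis
  have h4 : g.toBasis.det f = ∏ i, (inner ℝ (g i) (f i) : ℝ) :=
    @InnerProductSpace.gramSchmidtOrthonormalBasis_det ℝ _ _ _ _ (Fin N) _ _ iwf _ _ hcard f _
  calc |M.det| = |b.toBasis.det g.toBasis| * |g.toBasis.det f| := by
        rw [h3, abs_mul]
    _ = |∏ i, (inner ℝ (g i) (f i) : ℝ)| := by rw [habs1, one_mul, h4]
    _ ≤ ∏ i, |(inner ℝ (g i) (f i) : ℝ)| := by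
        rw [Finset.abs_prod]
    _ ≤ ∏ j, Real.sqrt (∑ i, (M i j) ^ 2) := by
        refine Finset.prod_le_prod (fun i _ => abs_nonneg _) fun i _ => ?_
        have := abs_real_inner_le_norm (g i) (f i)
        rw [g.orthonormal.1 i, one_mul, hnorm i] at this
        exact this

/-- If every entry of `B` is bounded by `K`, then the Euclidean operator norm of `B`
is at most `N * K`. -/
lemma opnorm_le_of_entries (N : ℕ) (B : Matrix (Fin N) (Fin N) ℝ) (K : ℝ) (hK : 0 ≤ K)
    (h : ∀ i j, |B i j| ≤ K) : ‖Matrix.toEuclideanCLM (𝕜 := ℝ) B‖ ≤ N * K := by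
  refine ContinuousLinearMap.opNorm_le_bound _ (by positivity) fun x => ?_
  have hx2 : ∑ j, (x j) ^ 2 = ‖x‖ ^ 2 := by
    rw [EuclideanSpace.norm_eq, Real.sq_sqrt (by positivity)]
    refine Finset.sum_congr rfl fun j _ => ?_
    rw [Real.norm_eq_abs, sq_abs]
  have hy : ∀ i, (Matrix.toEuclideanCLM (𝕜 := ℝ) B x) i = ∑ j, B i j * x j := by
    intro i
    rfl
  have key : ∀ i, ((Matrix.toEuclideanCLM (𝕜 := ℝ) B x) i) ^ 2 ≤ N * K ^ 2 * ‖x‖ ^ 2 := by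
    intro i
    rw [hy i]
    calc (∑ j, B i j * x j) ^ 2 ≤ (∑ j, (B i j) ^ 2) * ∑ j, (x j) ^ 2 :=
          Finset.sum_mul_sq_le_sq_mul_sq _ _ _
      _ ≤ (∑ _j : Fin N, K ^ 2) * ‖x‖ ^ 2 := by
          rw [hx2]
          refine mul_le_mul_of_nonneg_right (Finset.sum_le_sum fun j _ => ?_) (by positivity)
          rw [← sq_abs]
          exact pow_le_pow_left₀ (abs_nonneg _) (h i j) 2
      _ = N * K ^ 2 * ‖x‖ ^ 2 := by
          rw [Finset.sum_const, card_univ, Fintype.card_fin, nsmul_eq_mul]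
  have : ‖Matrix.toEuclideanCLM (𝕜 := ℝ) B x‖ ≤ Real.sqrt (∑ _i : Fin N, N * K ^ 2 * ‖x‖ ^ 2) := by
    rw [EuclideanSpace.norm_eq]
    refine Real.sqrt_le_sqrt (Finset.sum_le_sum fun i _ => ?_)
    rw [Real.norm_eq_abs, sq_abs]
    exact key i
  refine this.trans ?_
  rw [Finset.sum_const, card_univ, Fintype.card_fin, nsmul_eq_mul]
  have : (N : ℝ) * (N * K ^ 2 * ‖x‖ ^ 2) = (N * K * ‖x‖) ^ 2 := by ring
  rw [this, Real.sqrt_sq (by positivity)]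

/-- Hadamard-type estimate: if `A` is an `n × n` real matrix with `|det A| > 0` whose
columns have Euclidean norm at most `C`, then the operator norm (with respect to the
Euclidean norm on `ℝⁿ`) of `A⁻¹` satisfies `‖A⁻¹‖ ≤ n · C^(n-1) / |det A|`. -/
theorem stmt_0 (n : ℕ) (A : Matrix (Fin n) (Fin n) ℝ) (C : ℝ)
    (hdet : 0 < |A.det|)
    (hcol : ∀ j, Real.sqrt (∑ i, (A i j) ^ 2) ≤ C) :
    ‖Matrix.toEuclideanCLM (𝕜 := ℝ) A⁻¹‖ ≤ n * C ^ (n - 1) / |A.det| := by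
  classical
  rcases Nat.eq_zero_or_pos n with rfl | hn
  · have h0 : ∀ y : EuclideanSpace ℝ (Fin 0), ‖y‖ = 0 := fun y => by
      rw [EuclideanSpace.norm_eq]; simp
    simp only [Nat.cast_zero, zero_mul, zero_div]
    refine ContinuousLinearMap.opNorm_le_bound _ le_rfl fun x => ?_
    rw [h0, h0, mul_zero]
  have hC : 0 ≤ C := le_trans (Real.sqrt_nonneg _) (hcol ⟨0, hn⟩)
  have hdet' : A.det ≠ 0 := fun h => by simp [h] at hdet
  -- adjugate entry formula
  have hadj : ∀ i j, A.adjugate i j = (A.updateCol i (Pi.single j 1)).det := by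
    intro i j
    have h1 : (Aᵀ).adjugate j i = A.adjugate i j := by
      rw [← Matrix.adjugate_transpose]; rfl
    rw [← h1, Matrix.adjugate_apply, Matrix.updateRow_transpose, Matrix.det_transpose]
  -- entry bound for the adjugate
  have hadjbound : ∀ i j, |A.adjugate i j| ≤ C ^ (n - 1) := by
    intro i j
    rw [hadj i j]
    refine le_trans (hadamard_cols n _) ?_
    have hcols : ∀ k, Real.sqrt (∑ l, ((A.updateCol i (Pi.single j 1)) l k) ^ 2)
        ≤ if k = i then 1 else C := by
      intro k
      by_cases hk : k = i
      · subst hk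
        rw [if_pos rfl]
        have : ∑ l, ((A.updateCol k (Pi.single j 1)) l k) ^ 2 = 1 := by
          simp only [Matrix.updateCol_apply, if_pos rfl]
          rw [Finset.sum_eq_single j]
          · simp
          · intro l _ hl; simp [Pi.single_apply, hl]
          · simp
        rw [this, Real.sqrt_one]
      · simp only [if_neg hk]
        refine le_trans (le_of_eq ?_) (hcol k)
        congr 1
        refine Finset.sum_congr rfl fun l _ => ?_
        rw [Matrix.updateCol_apply, if_neg hk]
    calc ∏ k, Real.sqrt (∑ l, ((A.updateCol i (Pi.single j 1)) l k) ^ 2)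
        ≤ ∏ k, (if k = i then 1 else C) :=
          Finset.prod_le_prod (fun k _ => Real.sqrt_nonneg _) fun k _ => hcols k
      _ = C ^ (n - 1) := by
          rw [← Finset.mul_prod_erase Finset.univ _ (Finset.mem_univ i), if_pos rfl, one_mul]
          have he : (∏ k ∈ Finset.univ.erase i, if k = i then (1:ℝ) else C)
              = ∏ _k ∈ Finset.univ.erase i, C :=
            Finset.prod_congr rfl fun k hk => if_neg (Finset.mem_erase.mp hk).1
          rw [he, Finset.prod_const, Finset.card_erase_of_mem (Finset.mem_univ i), card_univ,
            Fintype.card_fin]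
  -- entry bound for the inverse
  have hinv : ∀ i j, |A⁻¹ i j| ≤ C ^ (n - 1) / |A.det| := by
    intro i j
    rw [Matrix.inv_def, Ring.inverse_eq_inv]
    simp only [Matrix.smul_apply, smul_eq_mul, abs_mul, abs_inv]
    rw [div_eq_inv_mul]
    exact mul_le_mul_of_nonneg_left (hadjbound i j) (by positivity)
  have := opnorm_le_of_entries n A⁻¹ (C ^ (n - 1) / |A.det|) (by positivity) hinv
  rwa [mul_div_assoc]
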